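/- Let k, m, n be positive integers with k dividing m and n > m/k. Define the m×n matrix A by: for each column i with 1 ≤ i ≤ m/k, A_{j,i} = 1/√k if (i−1)k < j ≤ i·k and A_{j,i} = 0 otherwise; for each column i with m/k < i ≤ n, A_{j,i} = 1/√m for every row j ∈ [m]. Then A has rank m/k and A is 1-incoherent (the coherence of its column space equals 1). -/

import Mathlib

open scoped BigOperators

/-- The coherence `μ(U)` of a subspace `U` of `ℝ^m`:
`μ(U) = (m / dim U) · max_{j ∈ [m]} ‖P_U e_j‖₂²`. -/
noncomputable def coherence {m : ℕ} (U : Submodule ℝ (EuclideanSpace ℝ (Fin m))) : ℝ :=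
  ((m : ℝ) / (Module.finrank ℝ U : ℝ)) *
    ⨆ j : Fin m,
      ‖(U.orthogonalProjection (EuclideanSpace.single j 1) : EuclideanSpace ℝ (Fin m))‖ ^ 2

/-- The column space of an `m × n` real matrix, as a subspace of `ℝ^m`. -/
noncomputable def colSpace {m n : ℕ} (A : Matrix (Fin m) (Fin n) ℝ) :
    Submodule ℝ (EuclideanSpace ℝ (Fin m)) :=
  Submodule.span ℝ (Set.range fun i : Fin n => (EuclideanSpace.equiv (Fin m) ℝ).symm fun j => A j i)

open scoped RealInnerProductSpace

private lemma blockCond_iff {k : ℕ} (hk : 0 < k) (i j : ℕ) :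
    (i * k ≤ j ∧ j < (i + 1) * k) ↔ j / k = i := by
  constructor
  · rintro ⟨h1, h2⟩
    exact Nat.div_eq_of_lt_le h1 h2
  · rintro rfl
    refine ⟨Nat.div_mul_le_self j k, ?_⟩
    have h1 := Nat.div_add_mod j k
    have h2 := Nat.mod_lt j hk
    nlinarith

theorem block_matrix_rank_and_incoherence {k m n : ℕ}
    (hk : 0 < k) (hm : 0 < m) (hdvd : k ∣ m) (hn : m / k < n)
    (A : Matrix (Fin m) (Fin n) ℝ)
    (hA1 : ∀ (j : Fin m) (i : Fin n), (i : ℕ) < m / k →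
      A j i =
        if (i : ℕ) * k ≤ (j : ℕ) ∧ (j : ℕ) < ((i : ℕ) + 1) * k then 1 / Real.sqrt k else 0)
    (hA2 : ∀ (j : Fin m) (i : Fin n), m / k ≤ (i : ℕ) → A j i = 1 / Real.sqrt m) :
    A.rank = m / k ∧ coherence (colSpace A) = 1 := by
  set r := m / k with hrdef
  have hkm : k ≤ m := Nat.le_of_dvd hm hdvd
  have hr0 : 0 < r := Nat.div_pos hkm hk
  have hrk : r * k = m := Nat.div_mul_cancel hdvd
  have hk0 : (0:ℝ) < (k:ℝ) := by exact_mod_cast hk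
  have hskpos : (0:ℝ) < Real.sqrt k := Real.sqrt_pos.mpr hk0
  have hsk : Real.sqrt k ≠ 0 := ne_of_gt hskpos
  have hm0 : (0:ℝ) < (m:ℝ) := by exact_mod_cast hm
  have hsm : Real.sqrt m ≠ 0 := ne_of_gt (Real.sqrt_pos.mpr hm0)
  -- the orthonormal block columns
  set b : Fin r → EuclideanSpace ℝ (Fin m) :=
    fun i => (EuclideanSpace.equiv (Fin m) ℝ).symm fun j =>
      if (j : ℕ) / k = (i : ℕ) then 1 / Real.sqrt k else 0 with hbdef
  have hbapp : ∀ (i : Fin r) (j : Fin m),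
      b i j = if (j : ℕ) / k = (i : ℕ) then 1 / Real.sqrt k else 0 := fun i j => rfl
  have hinner : ∀ x y : EuclideanSpace ℝ (Fin m), ⟪x, y⟫ = ∑ j, x j * y j := by
    intro x y
    simp [PiLp.inner_apply, RCLike.inner_apply, mul_comm]
  -- b is orthonormal
  have hb_inner : ∀ i i' : Fin r, ⟪b i, b i'⟫ = if i = i' then (1:ℝ) else 0 := by
    intro i i'
    rw [hinner]
    by_cases h : i = i'
    · subst h
      simp only [if_pos rfl]
      have hterm : ∀ j : Fin m,
          b i j * b i j = if (j : ℕ) / k = (i : ℕ) then (1 / Real.sqrt k)^2 else 0 := by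
        intro j
        rw [hbapp]
        by_cases hc : (j : ℕ) / k = (i : ℕ) <;> simp [hc, sq]
      calc ∑ j : Fin m, b i j * b i j
          = ∑ j : Fin m, (fun t : ℕ => if t / k = (i : ℕ) then (1 / Real.sqrt k)^2 else 0) (j : ℕ) := by
            exact Finset.sum_congr rfl fun j _ => hterm j
        _ = ∑ t ∈ Finset.range m, if t / k = (i : ℕ) then (1 / Real.sqrt k)^2 else 0 :=
            Fin.sum_univ_eq_sum_range
              (fun t : ℕ => if t / k = (i : ℕ) then (1 / Real.sqrt k)^2 else 0) m
        _ = ∑ t ∈ Finset.filter (fun t => t / k = (i : ℕ)) (Finset.range m), (1 / Real.sqrt k)^2 := by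
            rw [Finset.sum_filter]
        _ = 1 := by
            have hfilt : Finset.filter (fun t => t / k = (i : ℕ)) (Finset.range m)
                = Finset.Ico ((i : ℕ) * k) (((i : ℕ) + 1) * k) := by
              ext t
              have hle : ((i : ℕ) + 1) * k ≤ m := by
                rw [← hrk]
                exact Nat.mul_le_mul_right k i.2
              simp only [Finset.mem_filter, Finset.mem_range, Finset.mem_Ico,
                ← blockCond_iff hk (i : ℕ) t]
              omega
            rw [hfilt, Finset.sum_const, Nat.card_Ico]
            have hcard : ((i : ℕ) + 1) * k - (i : ℕ) * k = k := by
              rw [add_mul, one_mul]; omega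
            rw [hcard, nsmul_eq_mul, div_pow, one_pow, Real.sq_sqrt (le_of_lt hk0)]
            field_simp
    · simp only [if_neg h]
      apply Finset.sum_eq_zero
      intro j _
      rw [hbapp, hbapp]
      by_cases hc : (j : ℕ) / k = (i : ℕ)
      · have hc' : ¬ ((j : ℕ) / k = (i' : ℕ)) := by
          intro hc'
          exact h (Fin.ext (hc ▸ hc'))
        simp [hc']
      · simp [hc]
  have hb_on : Orthonormal ℝ b := orthonormal_iff_ite.mpr hb_inner
  -- span equality
  set g : Fin n → EuclideanSpace ℝ (Fin m) :=
    fun i => (EuclideanSpace.equiv (Fin m) ℝ).symm fun j => A j i with hgdef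
  have hgb : ∀ (i : Fin n) (h : (i : ℕ) < r), g i = b ⟨(i : ℕ), h⟩ := by
    intro i h
    change (EuclideanSpace.equiv (Fin m) ℝ).symm (fun j => A j i)
      = (EuclideanSpace.equiv (Fin m) ℝ).symm fun j =>
          if (j : ℕ) / k = ((⟨(i : ℕ), h⟩ : Fin r) : ℕ) then 1 / Real.sqrt k else 0
    refine congrArg _ (funext fun j => ?_)
    rw [hA1 j i h]
    exact if_congr (blockCond_iff hk (i : ℕ) (j : ℕ)) rfl rfl
  have hgu : ∀ (i : Fin n), r ≤ (i : ℕ) →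
      g i = ∑ i' : Fin r, (Real.sqrt k / Real.sqrt m) • b i' := by
    intro i h
    have h1 : (EuclideanSpace.equiv (Fin m) ℝ).symm (fun j => A j i)
        = (EuclideanSpace.equiv (Fin m) ℝ).symm fun _ => 1 / Real.sqrt m :=
      congrArg _ (funext fun j => hA2 j i h)
    show (EuclideanSpace.equiv (Fin m) ℝ).symm (fun j => A j i) = _
    rw [h1]
    · -- show symm (const 1/√m) = the sum
      apply (EuclideanSpace.equiv (Fin m) ℝ).injective
      simp only [ContinuousLinearEquiv.apply_symm_apply, map_sum, map_smul]
      funext j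
      rw [Finset.sum_apply]
      simp only [Pi.smul_apply, smul_eq_mul, ContinuousLinearEquiv.apply_symm_apply]
      have hj : (j : ℕ) / k < r := Nat.div_lt_div_of_lt_of_dvd hdvd j.2
      have hcond : ∀ i' : Fin r,
          ((j : ℕ) / k = (i' : ℕ)) ↔ ((⟨(j : ℕ) / k, hj⟩ : Fin r) = i') := by
        intro i'; constructor
        · intro hh; exact Fin.ext hh
        · intro hh; exact congrArg Fin.val hh
      symm
      calc ∑ i' : Fin r, Real.sqrt k / Real.sqrt m *
              ((EuclideanSpace.equiv (Fin m) ℝ) (b i') j)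
          = ∑ i' : Fin r, (if (⟨(j : ℕ) / k, hj⟩ : Fin r) = i'
              then Real.sqrt k / Real.sqrt m * (1 / Real.sqrt k) else 0) := by
            refine Finset.sum_congr rfl fun i' _ => ?_
            rw [show (EuclideanSpace.equiv (Fin m) ℝ) (b i') j
                = if (j : ℕ) / k = (i' : ℕ) then 1 / Real.sqrt k else 0 from rfl]
            rw [if_congr (hcond i') rfl rfl, mul_ite, mul_zero]
        _ = Real.sqrt k / Real.sqrt m * (1 / Real.sqrt k) := by
            rw [Finset.sum_ite_eq]
            simp
        _ = 1 / Real.sqrt m := by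
            field_simp
  have hcs : colSpace A = Submodule.span ℝ (Set.range g) := rfl
  have hUeq : colSpace A = Submodule.span ℝ (Set.range b) := by
    rw [hcs]
    apply le_antisymm
    · apply Submodule.span_le.2
      rintro _ ⟨i, rfl⟩
      by_cases h : (i : ℕ) < r
      · rw [hgb i h]
        exact Submodule.subset_span ⟨_, rfl⟩
      · rw [hgu i (le_of_not_gt h)]
        exact Submodule.sum_mem _ fun i' _ =>
          Submodule.smul_mem _ _ (Submodule.subset_span ⟨i', rfl⟩)
    · apply Submodule.span_le.2
      rintro _ ⟨i', rfl⟩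
      have hi' : (i' : ℕ) < n := lt_trans i'.2 hn
      refine Submodule.subset_span ⟨⟨(i' : ℕ), hi'⟩, ?_⟩
      rw [hgb ⟨(i' : ℕ), hi'⟩ i'.2]
  have hfin : Module.finrank ℝ (colSpace A) = r := by
    rw [hUeq, finrank_span_eq_card hb_on.linearIndependent, Fintype.card_fin]
  constructor
  · -- rank
    rw [Matrix.rank_eq_finrank_span_cols]
    have hmapeq : colSpace A = Submodule.map
        ((EuclideanSpace.equiv (Fin m) ℝ).symm.toLinearEquiv : (Fin m → ℝ) →ₗ[ℝ] _)
        (Submodule.span ℝ (Set.range A.transpose)) := by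
      rw [colSpace, Submodule.map_span]
      congr 1
      refine Eq.trans ?_ (Set.range_comp _ A.transpose)
      rfl
    rw [← hfin, hmapeq, LinearEquiv.finrank_map_eq]
    rfl
  · -- coherence
    have hjk : ∀ j : Fin m, (j : ℕ) / k < r := fun j => Nat.div_lt_div_of_lt_of_dvd hdvd j.2
    have hproj : ∀ j : Fin m,
        (((colSpace A).orthogonalProjection (EuclideanSpace.single j 1) :
          EuclideanSpace ℝ (Fin m))) = (1 / Real.sqrt k) • b ⟨(j : ℕ) / k, hjk j⟩ := by
      intro j
      rw [hUeq]
      apply Submodule.eq_starProjection_of_mem_of_inner_eq_zero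
      · exact Submodule.smul_mem _ _ (Submodule.subset_span ⟨_, rfl⟩)
      · intro w hw
        induction hw using Submodule.span_induction with
        | mem x hx =>
          obtain ⟨i, rfl⟩ := hx
          rw [inner_sub_left, real_inner_smul_left, hb_inner,
            EuclideanSpace.inner_single_left]
          simp only [map_one, one_mul]
          rw [hbapp]
          by_cases hc : (j : ℕ) / k = (i : ℕ)
          · have : (⟨(j : ℕ) / k, hjk j⟩ : Fin r) = i := Fin.ext hc
            simp [hc, this]
          · have : ¬ ((⟨(j : ℕ) / k, hjk j⟩ : Fin r) = i) := fun hh => hc (congrArg Fin.val hh)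
            simp [hc, this]
        | zero => exact inner_zero_right _
        | add x y hx hy ihx ihy => rw [inner_add_right, ihx, ihy, add_zero]
        | smul a x hx ihx => rw [real_inner_smul_right, ihx, mul_zero]
    have hsup : ∀ j : Fin m,
        ‖((colSpace A).orthogonalProjection (EuclideanSpace.single j 1) :
          EuclideanSpace ℝ (Fin m))‖ ^ 2 = 1 / (k : ℝ) := by
      intro j
      rw [hproj j, norm_smul, hb_on.1, mul_one, Real.norm_eq_abs,
        abs_of_nonneg (by positivity), div_pow, one_pow, Real.sq_sqrt (le_of_lt hk0)]
    have : Nonempty (Fin m) := ⟨⟨0, hm⟩⟩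
    rw [coherence, hfin]
    have hsup' : (⨆ j : Fin m,
        ‖((colSpace A).orthogonalProjection (EuclideanSpace.single j 1) :
          EuclideanSpace ℝ (Fin m))‖ ^ 2) = 1 / (k : ℝ) := by
      simp only [hsup]
      exact ciSup_const
    rw [hsup']
    have hmr : (r : ℝ) * (k : ℝ) = (m : ℝ) := by exact_mod_cast hrk
    have hr0' : (0:ℝ) < (r : ℝ) := by exact_mod_cast hr0
    field_simp
    linarith
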